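/- arXiv:1307.3881 — 3 statements merged into one kernel-verified Lean document; each statement's English description precedes it below -/
import Mathlib

section
/- Let D be a linearly connected digraph with exactly two strong components D_1 and D_2, both nontrivial, with indices of imprimitivity κ_1, κ_2 and sets of imprimitivity U_i^{(1)} (i ∈ ZMod κ_1) and U_j^{(2)} (j ∈ ZMod κ_2). Fix i ∈ ZMod κ_1 and j ∈ ZMod κ_2. Then the following are equivalent: (a) there exist vertices u ∈ U_i^{(1)} and v ∈ U_j^{(2)} and a positive integer s such that D has a directed (u,v)-walk of length 2sκ_1κ_2; (b) for every x ∈ U_i^{(1)} and every y ∈ U_j^{(2)} there exists a positive integer N such that, for every integer t ≥ N, D has a directed (x,y)-walk of length 2tκ_1κ_2. -/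
/-- A digraph: a finite vertex type with an irreflexive arc relation (no loops). -/
structure Digraph' (V : Type*) where
  Adj : V → V → Prop
  irrefl : ∀ v, ¬ Adj v v

namespace Digraph'

variable {V : Type*}

/-- There is a directed walk of length `m` from `x` to `y` in `D`;
i.e. `y` is an `m`-step prey of `x`. -/
def HasWalk (D : Digraph' V) (m : ℕ) (x y : V) : Prop :=
  ∃ f : ℕ → V, f 0 = x ∧ f m = y ∧ ∀ t, t < m → D.Adj (f t) (f (t + 1))

/-- There is a directed walk of length `m` from `x` to `y` staying inside `S`. -/
def HasWalkIn (D : Digraph' V) (S : Set V) (m : ℕ) (x y : V) : Prop :=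
  ∃ f : ℕ → V, f 0 = x ∧ f m = y ∧ (∀ t, t ≤ m → f t ∈ S) ∧
    ∀ t, t < m → D.Adj (f t) (f (t + 1))

/-- The `m`-step competition graph `C(D^m)` of `D`. -/
def compGraph (D : Digraph' V) (m : ℕ) : SimpleGraph V where
  Adj u v := u ≠ v ∧ ∃ z, D.HasWalk m u z ∧ D.HasWalk m v z
  symm := ⟨by
    rintro u v ⟨hne, z, h1, h2⟩
    exact ⟨hne.symm, z, h2, h1⟩⟩
  loopless := ⟨fun v h => h.1 rfl⟩

/-- The sequence `{C(D^m)}_{m ≥ 1}` converges. -/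
def CompConverges (D : Digraph' V) : Prop :=
  ∃ N : ℕ, 1 ≤ N ∧ ∀ m, N ≤ m → D.compGraph m = D.compGraph N

/-- The sequence `{C(D^m)}_{m ≥ 1}` converges to the graph `G`. -/
def CompConvergesTo (D : Digraph' V) (G : SimpleGraph V) : Prop :=
  ∃ N : ℕ, 1 ≤ N ∧ ∀ m, N ≤ m → D.compGraph m = G

/-- `D` is linearly connected with strong components `Vset 1, …, Vset η`. -/
structure IsLinConn (D : Digraph' V) (η : ℕ) (Vset : ℕ → Set V) : Prop where
  nonempty : ∀ i, 1 ≤ i → i ≤ η → (Vset i).Nonempty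
  cover : ∀ v : V, ∃ i, 1 ≤ i ∧ i ≤ η ∧ v ∈ Vset i
  disjoint' : ∀ i j, 1 ≤ i → i ≤ η → 1 ≤ j → j ≤ η →
      ∀ v : V, v ∈ Vset i → v ∈ Vset j → i = j
  strong : ∀ i, 1 ≤ i → i ≤ η → ∀ x ∈ Vset i, ∀ y ∈ Vset i,
      ∃ m, D.HasWalkIn (Vset i) m x y
  arcs : ∀ x y : V, D.Adj x y → ∃ i, 1 ≤ i ∧
      ((i ≤ η ∧ x ∈ Vset i ∧ y ∈ Vset i) ∨
       (i + 1 ≤ η ∧ x ∈ Vset i ∧ y ∈ Vset (i + 1)))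
  linked : ∀ i, 1 ≤ i → i + 1 ≤ η → ∃ x ∈ Vset i, ∃ y ∈ Vset (i + 1), D.Adj x y

/-- A component with vertex set `S` is trivial if `S` is a singleton. -/
def IsTrivialComp (S : Set V) : Prop := ∃ v : V, S = {v}

/-- `κ` is the index of imprimitivity of the (strong) component with vertex set `S`:
the gcd of the lengths of all closed directed walks inside `S`. -/
def IsImprimIndex (D : Digraph' V) (S : Set V) (κ : ℕ) : Prop :=
  (∀ (x : V) (m : ℕ), x ∈ S → 0 < m → D.HasWalkIn S m x x → κ ∣ m) ∧
  ∀ d : ℕ, (∀ (x : V) (m : ℕ), x ∈ S → 0 < m → D.HasWalkIn S m x x → d ∣ m) → d ∣ κ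

/-- `u` is an imprimitivity labelling on `S`: along any arc inside `S` the label
increases by one.  Its fibers are the sets of imprimitivity. -/
def IsImprimLabelling (D : Digraph' V) (S : Set V) {κ : ℕ} (u : V → ZMod κ) : Prop :=
  ∀ x ∈ S, ∀ y ∈ S, D.Adj x y → u y = u x + 1

/-- `(k, l) ∈ I(D_{p,p+1})`: some arc goes from a vertex of `U_k^{(p)}` to a vertex of
`U_l^{(p+1)}`. -/
def InI (D : Digraph' V) (Vset : ℕ → Set V) {κ : ℕ → ℕ}
    (u : ∀ i : ℕ, V → ZMod (κ i)) (p : ℕ) (k : ZMod (κ p)) (l : ZMod (κ (p + 1))) : Prop :=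
  ∃ x ∈ Vset p, ∃ y ∈ Vset (p + 1), D.Adj x y ∧ u p x = k ∧ u (p + 1) y = l

/-- `(i, j)` is an edge of the bipartite graph `B_{p,p+1}`. -/
def BAdj (D : Digraph' V) (Vset : ℕ → Set V) {κ : ℕ → ℕ}
    (u : ∀ i : ℕ, V → ZMod (κ i)) (p : ℕ) (i : ZMod (κ p)) (j : ZMod (κ (p + 1))) : Prop :=
  ∃ (k : ZMod (κ p)) (l : ZMod (κ (p + 1))) (a : ℤ),
    InI D Vset u p k l ∧ i = k + 1 + (a : ZMod (κ p)) ∧ j = l + (a : ZMod (κ (p + 1)))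

/-- The competition skeleton graph (CS-graph) `PT_D^{(η)}`: vertices are pairs `⟨r, i⟩`
with `i ∈ ZMod (κ r)` (only `1 ≤ r ≤ η` carries edges); `⟨p, i⟩` and `⟨p+1, j⟩` are
adjacent exactly when `i` and `j` are adjacent in `B_{p,p+1}`. -/
def csGraph (D : Digraph' V) (Vset : ℕ → Set V) {κ : ℕ → ℕ}
    (u : ∀ i : ℕ, V → ZMod (κ i)) (η : ℕ) : SimpleGraph ((r : ℕ) × ZMod (κ r)) where
  Adj a b := ∃ p, 1 ≤ p ∧ p + 1 ≤ η ∧ ∃ (i : ZMod (κ p)) (j : ZMod (κ (p + 1))),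
    BAdj D Vset u p i j ∧
    ((a = ⟨p, i⟩ ∧ b = ⟨p + 1, j⟩) ∨ (a = ⟨p + 1, j⟩ ∧ b = ⟨p, i⟩))
  symm := ⟨by
    rintro a b ⟨p, h1, h2, i, j, hB, hab⟩
    exact ⟨p, h1, h2, i, j, hB,
      hab.elim (fun h => Or.inr ⟨h.2, h.1⟩) (fun h => Or.inl ⟨h.2, h.1⟩)⟩⟩
  loopless := ⟨by
    rintro a ⟨p, _, _, i, j, _, hab⟩
    rcases hab with ⟨ha, hb⟩ | ⟨ha, hb⟩
    · have h : p = p + 1 := congrArg Sigma.fst (ha.symm.trans hb)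
      omega
    · have h : p + 1 = p := congrArg Sigma.fst (ha.symm.trans hb)
      omega⟩

end Digraph'

/-! ### Auxiliary numeric lemmas -/

section NumAux

/-- Two-element representation: if `gcd a b ∣ n` and `a*b ≤ n`, then
`n = x*a + y*b` with `y*b ≤ a*b`. -/
lemma rep2_aux (a b n : ℕ) (ha : 0 < a) (hb : 0 < b) (hd : Nat.gcd a b ∣ n)
    (hn : a * b ≤ n) : ∃ x y : ℕ, n = x * a + y * b ∧ y * b ≤ a * b := by
  set g := Nat.gcd a b with hg
  have hg0 : 0 < g := Nat.gcd_pos_of_pos_left _ ha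
  obtain ⟨a', ha'⟩ := Nat.gcd_dvd_left a b
  obtain ⟨b', hb'⟩ := Nat.gcd_dvd_right a b
  obtain ⟨q, hq⟩ := hd
  have ha'0 : 0 < a' := by
    rcases Nat.eq_zero_or_pos a' with h | h
    · simp [h] at ha'; omega
    · exact h
  have hbez := Nat.gcd_eq_gcd_ab a b
  set A := Nat.gcdA a b with hA
  set B := Nat.gcdB a b with hB
  have hnz : (n : ℤ) = a * (q * A) + b * (q * B) := by
    have h1 : (n : ℤ) = (g : ℤ) * q := by exact_mod_cast hq
    rw [h1, hbez]; ring
  set Y0 : ℤ := (q : ℤ) * B with hY0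
  set y : ℤ := Y0 % (a' : ℤ) with hy
  have ha'z : (0 : ℤ) < (a' : ℤ) := by exact_mod_cast ha'0
  have hy0 : 0 ≤ y := Int.emod_nonneg _ (by exact_mod_cast ha'0.ne')
  have hylt : y < (a' : ℤ) := Int.emod_lt_of_pos _ ha'z
  have hdvd : (a : ℤ) ∣ (n : ℤ) - y * b := by
    have h1 : Y0 - y = (a' : ℤ) * (Y0 / a') := by
      rw [hy, Int.emod_def]; ring
    have h2 : (n : ℤ) - y * b = a * (q * A) + b * (Y0 - y) := by
      rw [hnz]; ring
    rw [h2, h1]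
    have hab : (b : ℤ) * (a' : ℤ) = (a : ℤ) * (b' : ℤ) := by
      have e1 : (a : ℤ) = (g : ℤ) * a' := by exact_mod_cast ha'
      have e2 : (b : ℤ) = (g : ℤ) * b' := by exact_mod_cast hb'
      rw [e1, e2]; ring
    refine dvd_add (Dvd.intro _ rfl) ?_
    have : (b : ℤ) * ((a' : ℤ) * (Y0 / a')) = (a : ℤ) * ((b' : ℤ) * (Y0 / a')) := by
      rw [← mul_assoc, hab]; ring
    rw [this]
    exact Dvd.intro _ rfl
  have ha'le : (a' : ℤ) ≤ (a : ℤ) := by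
    have : a' ≤ a := by
      calc a' ≤ g * a' := Nat.le_mul_of_pos_left _ hg0
      _ = a := ha'.symm
    exact_mod_cast this
  have hyb : y * b ≤ (a : ℤ) * b := by
    have h1 : y * (b : ℤ) ≤ (a' : ℤ) * b := by
      apply mul_le_mul_of_nonneg_right _ (by positivity)
      omega
    calc y * (b : ℤ) ≤ (a' : ℤ) * b := h1
    _ ≤ (a : ℤ) * b := by
        apply mul_le_mul_of_nonneg_right ha'le (by positivity)
  have hnyb : 0 ≤ (n : ℤ) - y * b := by
    have : (a : ℤ) * b ≤ (n : ℤ) := by exact_mod_cast hn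
    omega
  obtain ⟨x, hx⟩ := hdvd
  have hx0 : 0 ≤ x := by
    by_contra h
    push_neg at h
    have : (a : ℤ) * x < 0 := by
      apply mul_neg_of_pos_of_neg (by exact_mod_cast ha) h
    omega
  refine ⟨x.toNat, y.toNat, ?_, ?_⟩
  · have : (n : ℤ) = (x.toNat : ℤ) * a + (y.toNat : ℤ) * b := by
      rw [Int.toNat_of_nonneg hx0, Int.toNat_of_nonneg hy0]
      linear_combination hx
    exact_mod_cast this
  · have : (y.toNat : ℤ) * b ≤ (a : ℤ) * b := by
      rw [Int.toNat_of_nonneg hy0]; exact hyb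
    exact_mod_cast this

/-- Positive multiples of an element stay in an additively closed set. -/
lemma mul_mem_addclosed {T : Set ℕ} (hT : ∀ a ∈ T, ∀ b ∈ T, a + b ∈ T)
    {m : ℕ} (hm : m ∈ T) : ∀ y, 1 ≤ y → y * m ∈ T := by
  intro y hy
  induction y with
  | zero => omega
  | succ k ih =>
    rcases Nat.eq_zero_or_pos k with h | h
    · subst h; simpa using hm
    · have := hT _ (ih h) _ hm
      have he : k * m + m = (k + 1) * m := by ring
      rwa [he] at this

/-- Key descent step: if all large multiples of `a` lie in the additively closed
set `T`, then there is a divisor `g` of all elements of `T` such that all large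
multiples of `g` lie in `T`. -/
lemma key_step {T : Set ℕ} (hT : ∀ a ∈ T, ∀ b ∈ T, a + b ∈ T) :
    ∀ a, 0 < a → (∃ M, ∀ n, M ≤ n → a ∣ n → n ∈ T) →
      ∃ g, 0 < g ∧ (∀ m ∈ T, g ∣ m) ∧ ∃ M, ∀ n, M ≤ n → g ∣ n → n ∈ T := by
  intro a
  induction a using Nat.strong_induction_on with
  | _ a ih =>
    rintro ha ⟨M, hM⟩
    by_cases hall : ∀ m ∈ T, a ∣ m
    · exact ⟨a, ha, hall, M, hM⟩
    · push_neg at hall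
      obtain ⟨m, hmT, hma⟩ := hall
      have hm0 : 0 < m := by
        rcases Nat.eq_zero_or_pos m with h | h
        · subst h; exact absurd (dvd_zero a) hma
        · exact h
      set g' := Nat.gcd a m with hg'
      have hg'0 : 0 < g' := Nat.gcd_pos_of_pos_left _ ha
      have hg'lt : g' < a := by
        have h1 : g' ∣ a := Nat.gcd_dvd_left a m
        have h2 : g' ≠ a := by
          intro h
          exact hma (h ▸ Nat.gcd_dvd_right a m)
        exact lt_of_le_of_ne (Nat.le_of_dvd ha h1) h2
      apply ih g' hg'lt hg'0
      refine ⟨M + a * m, fun n hn hdn => ?_⟩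
      obtain ⟨x, y, hxy, hyab⟩ := rep2_aux a m n ha hm0 hdn (by omega)
      have hxa : x * a ∈ T := by
        apply hM
        · omega
        · exact Dvd.intro_left _ rfl
      rcases Nat.eq_zero_or_pos y with h | h
      · subst h; rw [hxy]; simpa using hxa
      · have hym : y * m ∈ T := mul_mem_addclosed hT hmT y h
        have := hT _ hxa _ hym
        rwa [← hxy] at this

/-- A nonempty additively closed set of positive naturals contains every
sufficiently large multiple of some common divisor `g` of all its elements. -/
lemma semigroup_cofinite {T : Set ℕ} (hT : ∀ a ∈ T, ∀ b ∈ T, a + b ∈ T)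
    {t0 : ℕ} (ht0 : t0 ∈ T) (ht0p : 0 < t0) :
    ∃ g, 0 < g ∧ (∀ m ∈ T, g ∣ m) ∧ ∃ M, ∀ n, M ≤ n → g ∣ n → n ∈ T := by
  apply key_step hT t0 ht0p
  refine ⟨t0, fun n hn hdn => ?_⟩
  obtain ⟨k, hk⟩ := hdn
  have hk1 : 1 ≤ k := by
    rcases Nat.eq_zero_or_pos k with h | h
    · subst h; omega
    · exact h
  have := mul_mem_addclosed hT ht0 k hk1
  rwa [hk, mul_comm]

end NumAux

/-! ### Auxiliary walk lemmas -/

namespace Digraph'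

variable {V : Type*} {D : Digraph' V}

lemma HasWalkIn.hasWalk {S : Set V} {m : ℕ} {x y : V}
    (h : D.HasWalkIn S m x y) : D.HasWalk m x y := by
  obtain ⟨f, h0, hm, _, ha⟩ := h
  exact ⟨f, h0, hm, ha⟩

lemma HasWalk.append {m n : ℕ} {x y z : V} (h1 : D.HasWalk m x y)
    (h2 : D.HasWalk n y z) : D.HasWalk (m + n) x z := by
  obtain ⟨f, hf0, hfm, hfa⟩ := h1
  obtain ⟨g, hg0, hgn, hga⟩ := h2
  refine ⟨fun t => if t < m then f t else g (t - m), ?_, ?_, ?_⟩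
  · by_cases h : 0 < m
    · simp [h, hf0]
    · have hm0 : m = 0 := by omega
      subst hm0
      simpa [hg0] using hfm.symm.trans hf0
  · have h : ¬ m + n < m := by omega
    simp [h, hgn]
  · intro t ht
    by_cases h : t + 1 < m
    · have h' : t < m := by omega
      simpa [h, h'] using hfa t h'
    · by_cases h' : t < m
      · have hm : t + 1 = m := by omega
        have : g (t + 1 - m) = f m := by rw [hm]; simp [hg0, hfm]
        simp only [if_pos h', if_neg h]
        rw [this, ← hm]
        exact hfa t h'
      · have e1 : t - m + 1 = t + 1 - m := by omega
        simp only [if_neg h', if_neg h]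
        rw [← e1]
        exact hga (t - m) (by omega)

lemma HasWalkIn.append {S : Set V} {m n : ℕ} {x y z : V} (h1 : D.HasWalkIn S m x y)
    (h2 : D.HasWalkIn S n y z) : D.HasWalkIn S (m + n) x z := by
  obtain ⟨f, hf0, hfm, hfS, hfa⟩ := h1
  obtain ⟨g, hg0, hgn, hgS, hga⟩ := h2
  refine ⟨fun t => if t < m then f t else g (t - m), ?_, ?_, ?_, ?_⟩
  · by_cases h : 0 < m
    · simp [h, hf0]
    · have hm0 : m = 0 := by omega
      subst hm0
      simpa [hg0] using hfm.symm.trans hf0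
  · have h : ¬ m + n < m := by omega
    simp [h, hgn]
  · intro t ht
    by_cases h : t < m
    · simpa [h] using hfS t (by omega)
    · simpa [h] using hgS (t - m) (by omega)
  · intro t ht
    by_cases h : t + 1 < m
    · have h' : t < m := by omega
      simpa [h, h'] using hfa t h'
    · by_cases h' : t < m
      · have hm : t + 1 = m := by omega
        have : g (t + 1 - m) = f m := by rw [hm]; simp [hg0, hfm]
        simp only [if_pos h', if_neg h]
        rw [this, ← hm]
        exact hfa t h'
      · have e1 : t - m + 1 = t + 1 - m := by omega
        simp only [if_neg h', if_neg h]
        rw [← e1]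
        exact hga (t - m) (by omega)

lemma hasWalkIn_zero {S : Set V} {x y : V} :
    D.HasWalkIn S 0 x y ↔ x = y ∧ x ∈ S := by
  constructor
  · rintro ⟨f, h0, hm, hS, _⟩
    exact ⟨h0.symm.trans hm, h0 ▸ hS 0 le_rfl⟩
  · rintro ⟨rfl, hx⟩
    exact ⟨fun _ => x, rfl, rfl, fun t _ => hx, fun t ht => absurd ht (by omega)⟩

lemma hasWalkIn_one {S : Set V} {x y : V} (hx : x ∈ S) (hy : y ∈ S)
    (h : D.Adj x y) : D.HasWalkIn S 1 x y := by
  refine ⟨fun t => if t = 0 then x else y, by simp, by simp, ?_, ?_⟩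
  · intro t _
    by_cases h : t = 0 <;> simp [h, hx, hy]
  · intro t ht
    have : t = 0 := by omega
    simp [this, h]

/-- In a nontrivial strongly connected set, every vertex has an out-neighbour. -/
lemma exists_out_neighbor {S : Set V}
    (hstrong : ∀ x ∈ S, ∀ y ∈ S, ∃ m, D.HasWalkIn S m x y)
    (hnt : ¬ IsTrivialComp S) {x : V} (hx : x ∈ S) :
    ∃ z ∈ S, D.Adj x z := by
  have : ∃ w ∈ S, w ≠ x := by
    by_contra h
    push_neg at h
    exact hnt ⟨x, Set.eq_singleton_iff_unique_mem.mpr ⟨hx, h⟩⟩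
  obtain ⟨w, hw, hwx⟩ := this
  obtain ⟨m, f, hf0, hfm, hfS, hfa⟩ := hstrong x hx w hw
  have hm0 : 0 < m := by
    rcases Nat.eq_zero_or_pos m with h | h
    · exact absurd (hf0.symm.trans (h ▸ hfm)) hwx.symm
    · exact h
  exact ⟨f 1, hfS 1 hm0, hf0 ▸ hfa 0 hm0⟩

/-- From any vertex of a nontrivial strong component there are walks of every length. -/
lemma exists_walk_of_length {S : Set V}
    (hstrong : ∀ x ∈ S, ∀ y ∈ S, ∃ m, D.HasWalkIn S m x y)
    (hnt : ¬ IsTrivialComp S) {x : V} (hx : x ∈ S) :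
    ∀ m : ℕ, ∃ z ∈ S, D.HasWalkIn S m x z := by
  intro m
  induction m with
  | zero => exact ⟨x, hx, (hasWalkIn_zero).mpr ⟨rfl, hx⟩⟩
  | succ k ih =>
    obtain ⟨z, hz, hw⟩ := ih
    obtain ⟨z', hz', ha⟩ := exists_out_neighbor hstrong hnt hz
    exact ⟨z', hz', hw.append (hasWalkIn_one hz hz' ha)⟩

/-- The labelling increases by the length along any walk inside `S`. -/
lemma label_walk {S : Set V} {κ : ℕ} {u : V → ZMod κ}
    (hu : D.IsImprimLabelling S u) {m : ℕ} {x y : V}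
    (h : D.HasWalkIn S m x y) : u y = u x + m := by
  obtain ⟨f, hf0, hfm, hfS, hfa⟩ := h
  have key : ∀ t, t ≤ m → u (f t) = u (f 0) + t := by
    intro t
    induction t with
    | zero => simp
    | succ k ih =>
      intro hk
      have h1 : u (f (k + 1)) = u (f k) + 1 :=
        hu (f k) (hfS k (by omega)) (f (k + 1)) (hfS (k + 1) hk) (hfa k (by omega))
      rw [h1, ih (by omega)]
      push_cast
      ring
  rw [← hf0, ← hfm]
  exact key m le_rfl

/-- Main occupancy lemma: between two vertices of a nontrivial strong component
carrying the same label, walks of every sufficiently large length divisible by κ exist. -/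
lemma occupancy {S : Set V} {κ : ℕ} {u : V → ZMod κ}
    (hstrong : ∀ x ∈ S, ∀ y ∈ S, ∃ m, D.HasWalkIn S m x y)
    (hnt : ¬ IsTrivialComp S)
    (hκ : D.IsImprimIndex S κ) (hu : D.IsImprimLabelling S u)
    {x x' : V} (hx : x ∈ S) (hx' : x' ∈ S) (hlab : u x = u x') :
    ∃ M, ∀ m, M ≤ m → κ ∣ m → D.HasWalkIn S m x x' := by
  classical
  set T : Set ℕ := {m | 0 < m ∧ D.HasWalkIn S m x x} with hTdef
  have hTadd : ∀ a ∈ T, ∀ b ∈ T, a + b ∈ T := by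
    rintro a ⟨ha0, ha⟩ b ⟨hb0, hb⟩
    exact ⟨by omega, ha.append hb⟩
  -- a positive closed walk at x
  obtain ⟨z, hz, haz⟩ := exists_out_neighbor hstrong hnt hx
  obtain ⟨p0, hp0⟩ := hstrong z hz x hx
  have ht0 : 1 + p0 ∈ T := ⟨by omega, (hasWalkIn_one hx hz haz).append hp0⟩
  obtain ⟨g, hg0, hgdvd, M, hM⟩ := semigroup_cofinite hTadd ht0 (by omega)
  -- κ ∣ g
  have hκg : κ ∣ g := by
    have h1 : g * (M + 1) ∈ T := hM _ (by nlinarith) (Dvd.intro _ rfl)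
    have h2 : g * (M + 2) ∈ T := hM _ (by nlinarith) (Dvd.intro _ rfl)
    have hd1 : κ ∣ g * (M + 1) := hκ.1 x _ hx h1.1 h1.2
    have hd2 : κ ∣ g * (M + 2) := hκ.1 x _ hx h2.1 h2.2
    have := Nat.dvd_sub hd2 hd1
    have he : g * (M + 2) - g * (M + 1) = g := by
      have : g * (M + 2) = g * (M + 1) + g := by ring
      omega
    rwa [he] at this
  -- g ∣ κ
  have hgκ : g ∣ κ := by
    apply hκ.2
    intro z' m hz' hm0 hw
    obtain ⟨p, hp⟩ := hstrong x hx z' hz'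
    obtain ⟨q, hq⟩ := hstrong z' hz' x hx
    rcases Nat.eq_zero_or_pos (p + q) with h | h
    · have hp0' : p = 0 := by omega
      have hq0' : q = 0 := by omega
      have hxz : x = z' := ((hasWalkIn_zero).mp (hp0' ▸ hp)).1
      subst hxz
      exact hgdvd m ⟨hm0, hw⟩
    · have hin1 : p + m + q ∈ T := ⟨by omega, (hp.append hw).append hq⟩
      have hin2 : p + q ∈ T := ⟨h, hp.append hq⟩
      have hd1 := hgdvd _ hin1
      have hd2 := hgdvd _ hin2
      have := Nat.dvd_sub hd1 hd2
      have he : p + m + q - (p + q) = m := by omega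
      rwa [he] at this
  have hgκeq : g = κ := Nat.dvd_antisymm hgκ hκg
  subst hgκeq
  -- the connecting walk x → x'
  obtain ⟨p, hp⟩ := hstrong x hx x' hx'
  have hκp : g ∣ p := by
    have h1 : u x' = u x + p := label_walk hu hp
    have h2 : ((p : ℕ) : ZMod g) = 0 := by
      have := h1.symm.trans hlab.symm
      -- u x + p = u x
      rw [hlab] at h1
      have : u x' + (p : ZMod g) = u x' + 0 := by
        rw [add_zero]; exact h1.symm
      exact add_left_cancel this
    exact (ZMod.natCast_eq_zero_iff p g).mp h2
  refine ⟨M + p + 1, fun m hm hdm => ?_⟩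
  have hn : m - p ∈ T := by
    apply hM
    · omega
    · exact Nat.dvd_sub hdm hκp
  have := hn.2.append hp
  have he : m - p + p = m := by omega
  rwa [he] at this

/-- Every label is attained in a nontrivial strong component. -/
lemma label_surjective {S : Set V} {κ : ℕ} {u : V → ZMod κ}
    (hstrong : ∀ x ∈ S, ∀ y ∈ S, ∃ m, D.HasWalkIn S m x y)
    (hnt : ¬ IsTrivialComp S) (hκ0 : 0 < κ)
    (hu : D.IsImprimLabelling S u) {x : V} (hx : x ∈ S) (c : ZMod κ) :
    ∃ y ∈ S, u y = c := by
  haveI : NeZero κ := ⟨hκ0.ne'⟩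
  obtain ⟨y, hy, hw⟩ := exists_walk_of_length hstrong hnt hx (c - u x).val
  refine ⟨y, hy, ?_⟩
  rw [label_walk hu hw, ZMod.natCast_zmod_val]
  ring

end Digraph'

open Digraph' in
/-- equivalence of the existence of one long walk of length `2sκ₁κ₂`
between the imprimitivity classes `U_i^{(1)}` and `U_j^{(2)}` and the existence,
for all pairs, of walks of all sufficiently large such lengths. -/
theorem stmt3 {V : Type*} [Fintype V] (D : Digraph' V) (Vset : ℕ → Set V)
    (hD : D.IsLinConn 2 Vset)
    (h1 : ¬ IsTrivialComp (Vset 1)) (h2 : ¬ IsTrivialComp (Vset 2))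
    (κ : ℕ → ℕ) (u : ∀ i : ℕ, V → ZMod (κ i))
    (hκ : ∀ i, 1 ≤ i → i ≤ 2 → IsImprimIndex D (Vset i) (κ i))
    (hu : ∀ i, 1 ≤ i → i ≤ 2 → IsImprimLabelling D (Vset i) (u i))
    (i : ZMod (κ 1)) (j : ZMod (κ 2)) :
    (∃ x ∈ Vset 1, u 1 x = i ∧ ∃ y ∈ Vset 2, u 2 y = j ∧
       ∃ s, 1 ≤ s ∧ D.HasWalk (2 * s * κ 1 * κ 2) x y) ↔
    (∀ x ∈ Vset 1, u 1 x = i → ∀ y ∈ Vset 2, u 2 y = j →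
       ∃ N, 1 ≤ N ∧ ∀ t, N ≤ t → D.HasWalk (2 * t * κ 1 * κ 2) x y) := by
  have hs1 := hD.strong 1 (by norm_num) (by norm_num)
  have hs2 := hD.strong 2 (by norm_num) (by norm_num)
  have hκ1 := hκ 1 (by norm_num) (by norm_num)
  have hκ2 := hκ 2 (by norm_num) (by norm_num)
  have hu1 := hu 1 (by norm_num) (by norm_num)
  have hu2 := hu 2 (by norm_num) (by norm_num)
  -- positivity of the indices
  have hκpos : ∀ (S : Set V) (k : ℕ), (∀ x ∈ S, ∀ y ∈ S, ∃ m, D.HasWalkIn S m x y) →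
      ¬ IsTrivialComp S → D.IsImprimIndex S k → S.Nonempty → 0 < k := by
    intro S k hstrong hnt hk ⟨x0, hx0⟩
    obtain ⟨z, hz, haz⟩ := exists_out_neighbor hstrong hnt hx0
    obtain ⟨p0, hp0⟩ := hstrong z hz x0 hx0
    have hw : D.HasWalkIn S (1 + p0) x0 x0 := (hasWalkIn_one hx0 hz haz).append hp0
    have := hk.1 x0 (1 + p0) hx0 (by omega) hw
    rcases Nat.eq_zero_or_pos k with h | h
    · subst h; simp at this
    · exact h
  have hκ1pos : 0 < κ 1 := hκpos _ _ hs1 h1 hκ1 (hD.nonempty 1 (by norm_num) (by norm_num))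
  have hκ2pos : 0 < κ 2 := hκpos _ _ hs2 h2 hκ2 (hD.nonempty 2 (by norm_num) (by norm_num))
  constructor
  · -- (a) → (b)
    rintro ⟨x, hx, hxi, y, hy, hyj, s, hs, W⟩
    intro x' hx' hx'i y' hy' hy'j
    obtain ⟨M1, hM1⟩ := occupancy hs1 h1 hκ1 hu1 hx' hx (hx'i.trans hxi.symm)
    obtain ⟨M2, hM2⟩ := occupancy hs2 h2 hκ2 hu2 hy hy' (hyj.trans hy'j.symm)
    set A := M1 + 1 with hA
    refine ⟨s + A + M2 + 1, by omega, fun t ht => ?_⟩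
    set B := t - s - A with hB
    have hBge : M2 + 1 ≤ B := by omega
    have htAB : A + s + B = t := by omega
    have hmul1 : 1 ≤ κ 1 * κ 2 := Nat.mul_pos hκ1pos hκ2pos
    -- the first leg
    have ha : D.HasWalkIn (Vset 1) (2 * A * κ 1 * κ 2) x' x := by
      apply hM1
      · nlinarith
      · exact ⟨2 * A * κ 2, by ring⟩
    -- the last leg
    have hb : D.HasWalkIn (Vset 2) (2 * B * κ 1 * κ 2) y y' := by
      apply hM2
      · nlinarith
      · exact ⟨2 * B * κ 1, by ring⟩
    have := (ha.hasWalk.append W).append hb.hasWalk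
    have he : 2 * A * κ 1 * κ 2 + 2 * s * κ 1 * κ 2 + 2 * B * κ 1 * κ 2
        = 2 * t * κ 1 * κ 2 := by rw [← htAB]; ring
    rwa [he] at this
  · -- (b) → (a)
    intro h
    obtain ⟨x0, hx0⟩ := hD.nonempty 1 (by norm_num) (by norm_num)
    obtain ⟨y0, hy0⟩ := hD.nonempty 2 (by norm_num) (by norm_num)
    obtain ⟨x, hx, hxi⟩ := label_surjective hs1 h1 hκ1pos hu1 hx0 i
    obtain ⟨y, hy, hyj⟩ := label_surjective hs2 h2 hκ2pos hu2 hy0 j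
    obtain ⟨N, hN1, hN⟩ := h x hx hxi y hy hyj
    exact ⟨x, hx, hxi, y, hy, hyj, N, hN1, hN N le_rfl⟩
end

section
/- Let D be a linearly connected digraph with η ≥ 3 strong components, all nontrivial, and let p be an index with p + 2 ≤ η. Let x ∈ U_i^{(p)} and z ∈ U_k^{(p+2)}. If D has a directed (x,z)-walk of length s·κ_{p+1}κ_{p+2} for some positive integer s, then there exists j ∈ ZMod κ_{p+1} such that (i, j) is an edge of B_{p,p+1} and (j, k) is an edge of B_{p+1,p+2}. -/
open Digraph' in
/-- if there is an `(x,z)`-walk of length `s·κ_{p+1}·κ_{p+2}` with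
`x ∈ U_i^{(p)}` and `z ∈ U_k^{(p+2)}`, then for some `j`, `(i,j) ∈ E(B_{p,p+1})`
and `(j,k) ∈ E(B_{p+1,p+2})`. -/
theorem stmt6 {V : Type*} [Fintype V] (D : Digraph' V) (η : ℕ) (Vset : ℕ → Set V)
    (hD : D.IsLinConn η Vset) (hη : 3 ≤ η)
    (hnt : ∀ i, 1 ≤ i → i ≤ η → ¬ IsTrivialComp (Vset i))
    (κ : ℕ → ℕ) (u : ∀ i : ℕ, V → ZMod (κ i))
    (hκ : ∀ i, 1 ≤ i → i ≤ η → IsImprimIndex D (Vset i) (κ i))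
    (hu : ∀ i, 1 ≤ i → i ≤ η → IsImprimLabelling D (Vset i) (u i))
    (p : ℕ) (hp : 1 ≤ p) (hpη : p + 2 ≤ η)
    (i : ZMod (κ p)) (k : ZMod (κ (p + 2))) (x z : V)
    (hx : x ∈ Vset p) (hxi : u p x = i) (hz : z ∈ Vset (p + 2)) (hzk : u (p + 2) z = k)
    (s : ℕ) (hs : 1 ≤ s)
    (hw : D.HasWalk (s * (κ (p + 1) * κ (p + 2))) x z) :
    ∃ j : ZMod (κ (p + 1)), BAdj D Vset u p i j ∧ BAdj D Vset u (p + 1) j k := by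
  classical
  set M := s * (κ (p + 1) * κ (p + 2)) with hMdef
  obtain ⟨f, hf0, hfM, hfadj⟩ := hw
  choose c hc1 hc2 hc3 using fun t => hD.cover (f t)
  have hc0 : c 0 = p := by
    refine hD.disjoint' (c 0) p (hc1 0) (hc2 0) hp (by omega) (f 0) (hc3 0) ?_
    rw [hf0]; exact hx
  have hcM : c M = p + 2 := by
    refine hD.disjoint' (c M) (p + 2) (hc1 M) (hc2 M) (by omega) hpη (f M) (hc3 M) ?_
    rw [hfM]; exact hz
  have hMpos : 0 < M := by
    rcases Nat.eq_zero_or_pos M with h | h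
    · exfalso; rw [h] at hcM; omega
    · exact h
  have hstep : ∀ t, t < M → c (t + 1) = c t ∨ c (t + 1) = c t + 1 := by
    intro t ht
    obtain ⟨q, h1, h⟩ := hD.arcs _ _ (hfadj t ht)
    rcases h with ⟨hle, hx', hy'⟩ | ⟨hle, hx', hy'⟩
    · have e1 : c t = q := hD.disjoint' _ _ (hc1 t) (hc2 t) h1 hle _ (hc3 t) hx'
      have e2 : c (t + 1) = q :=
        hD.disjoint' _ _ (hc1 _) (hc2 _) h1 hle _ (hc3 _) hy'
      omega
    · have e1 : c t = q :=
        hD.disjoint' _ _ (hc1 t) (hc2 t) h1 (by omega) _ (hc3 t) hx'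
      have e2 : c (t + 1) = q + 1 :=
        hD.disjoint' _ _ (hc1 _) (hc2 _) (by omega) hle _ (hc3 _) hy'
      omega
  have hmono : ∀ t' t, t ≤ t' → t' ≤ M → c t ≤ c t' := by
    intro t'
    induction t' with
    | zero => intro t h1 _; interval_cases t; exact le_rfl
    | succ n ih =>
      intro t h1 h2
      rcases Nat.lt_or_ge t (n + 1) with hlt | hge
      · have h3 := ih t (by omega) (by omega)
        rcases hstep n (by omega) with h | h <;> omega
      · have : t = n + 1 := by omega
        rw [this]
  -- t1 : last time in V_p
  set t1 := Nat.findGreatest (fun t => c t = p) M with ht1def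
  have ht1P : c t1 = p := Nat.findGreatest_spec (P := fun t => c t = p) (Nat.zero_le M) hc0
  have ht1le : t1 ≤ M := Nat.findGreatest_le M
  have ht1lt : t1 < M := by
    rcases Nat.lt_or_ge t1 M with h | h
    · exact h
    · exfalso; have : t1 = M := by omega
      rw [this] at ht1P; omega
  have ht1succ : c (t1 + 1) = p + 1 := by
    have hne : ¬ (c (t1 + 1) = p) :=
      Nat.findGreatest_is_greatest (P := fun t => c t = p) (n := M) (by omega) (by omega)
    rcases hstep t1 ht1lt with h | h
    · exact absurd (h.trans ht1P) hne
    · rw [h, ht1P]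
  -- t2 : last time in V_{p+1}
  set t2 := Nat.findGreatest (fun t => c t = p + 1) M with ht2def
  have ht2P : c t2 = p + 1 := Nat.findGreatest_spec (P := fun t => c t = p + 1) (m := t1 + 1) (by omega) ht1succ
  have ht2le : t2 ≤ M := Nat.findGreatest_le M
  have ht1t2 : t1 + 1 ≤ t2 := Nat.le_findGreatest (P := fun t => c t = p + 1) (by omega) ht1succ
  have ht2lt : t2 < M := by
    rcases Nat.lt_or_ge t2 M with h | h
    · exact h
    · exfalso; have : t2 = M := by omega
      rw [this] at ht2P; omega
  have ht2succ : c (t2 + 1) = p + 2 := by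
    have hne : ¬ (c (t2 + 1) = p + 1) :=
      Nat.findGreatest_is_greatest (P := fun t => c t = p + 1) (n := M) (by omega) (by omega)
    rcases hstep t2 ht2lt with h | h
    · exact absurd (h.trans ht2P) hne
    · rw [h, ht2P]
  -- memberships
  have hmem1 : ∀ t, t ≤ t1 → f t ∈ Vset p := by
    intro t ht
    have h1 : c t ≤ p := ht1P ▸ hmono t1 t ht ht1le
    have h2 : p ≤ c t := hc0 ▸ hmono t 0 (Nat.zero_le t) (by omega)
    have : c t = p := by omega
    exact this ▸ hc3 t
  have hmem2 : ∀ t, t1 + 1 ≤ t → t ≤ t2 → f t ∈ Vset (p + 1) := by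
    intro t h1 h2
    have h3 : c t ≤ p + 1 := ht2P ▸ hmono t2 t h2 ht2le
    have h4 : p + 1 ≤ c t := ht1succ ▸ hmono t (t1 + 1) h1 (by omega)
    have : c t = p + 1 := by omega
    exact this ▸ hc3 t
  have hmem3 : ∀ t, t2 + 1 ≤ t → t ≤ M → f t ∈ Vset (p + 2) := by
    intro t h1 h2
    have h3 : c t ≤ p + 2 := hcM ▸ hmono M t h2 le_rfl
    have h4 : p + 2 ≤ c t := ht2succ ▸ hmono t (t2 + 1) h1 (by omega)
    have : c t = p + 2 := by omega
    exact this ▸ hc3 t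
  -- segment labelling
  have seg : ∀ q, 1 ≤ q → q ≤ η → ∀ b a, a ≤ b → b ≤ M →
      (∀ t, a ≤ t → t ≤ b → f t ∈ Vset q) →
      u q (f b) = u q (f a) + ((b - a : ℕ) : ZMod (κ q)) := by
    intro q hq1 hq2 b
    induction b with
    | zero =>
      intro a h1 _ _
      interval_cases a
      simp
    | succ n ih =>
      intro a h1 h2 hmem
      rcases Nat.lt_or_ge a (n + 1) with hlt | hge
      · have ihn := ih a (by omega) (by omega) (fun t ha hb => hmem t ha (by omega))
        have hadj : u q (f (n + 1)) = u q (f n) + 1 :=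
          hu q hq1 hq2 (f n) (hmem n (by omega) (by omega)) (f (n + 1))
            (hmem (n + 1) (by omega) le_rfl) (hfadj n (by omega))
        rw [hadj, ihn]
        have he : (n + 1 - a : ℕ) = (n - a) + 1 := by omega
        rw [he]
        push_cast
        ring
      · have : a = n + 1 := by omega
        subst this
        simp
  -- labels at the key times
  have hlab1 : u p (f t1) = i + ((t1 : ℕ) : ZMod (κ p)) := by
    have := seg p hp (by omega) t1 0 (Nat.zero_le t1) (by omega)
      (fun t _ hb => hmem1 t hb)
    rw [this, hf0, hxi]
    simp
  have hlab2 : u (p + 1) (f t2) =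
      u (p + 1) (f (t1 + 1)) + ((t2 - (t1 + 1) : ℕ) : ZMod (κ (p + 1))) :=
    seg (p + 1) (by omega) (by omega) t2 (t1 + 1) ht1t2 (by omega) hmem2
  have hlab3 : k = u (p + 2) (f (t2 + 1)) + ((M - (t2 + 1) : ℕ) : ZMod (κ (p + 2))) := by
    have := seg (p + 2) (by omega) hpη M (t2 + 1) (by omega) le_rfl hmem3
    rw [hfM, hzk] at this
    exact this
  -- the two InI witnesses
  have hInI1 : InI D Vset u p (u p (f t1)) (u (p + 1) (f (t1 + 1))) :=
    ⟨f t1, hmem1 t1 le_rfl, f (t1 + 1), hmem2 (t1 + 1) le_rfl ht1t2,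
      hfadj t1 ht1lt, rfl, rfl⟩
  have hInI2 : InI D Vset u (p + 1) (u (p + 1) (f t2)) (u (p + 1 + 1) (f (t2 + 1))) :=
    ⟨f t2, hmem2 t2 ht1t2 le_rfl, f (t2 + 1), hmem3 (t2 + 1) le_rfl (by omega),
      hfadj t2 ht2lt, rfl, rfl⟩
  have hMzero : ((M : ℕ) : ZMod (κ (p + 1))) = 0 := by
    have : (κ (p + 1) : ℕ) ∣ M := ⟨s * κ (p + 2), by rw [hMdef]; ring⟩
    exact (ZMod.natCast_eq_zero_iff M (κ (p + 1))).mpr this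
  refine ⟨u (p + 1) (f (t1 + 1)) + ((-(t1 + 1) : ℤ) : ZMod (κ (p + 1))), ?_, ?_⟩
  · refine ⟨u p (f t1), u (p + 1) (f (t1 + 1)), -(t1 + 1 : ℤ), hInI1, ?_, rfl⟩
    rw [hlab1]
    push_cast
    ring
  · refine ⟨u (p + 1) (f t2), u (p + 1 + 1) (f (t2 + 1)), (M : ℤ) - (t2 + 1), hInI2, ?_, ?_⟩
    · rw [hlab2]
      have he : ((t2 - (t1 + 1) : ℕ) : ZMod (κ (p + 1))) =
          ((t2 : ℕ) : ZMod (κ (p + 1))) - ((t1 + 1 : ℕ) : ZMod (κ (p + 1))) := by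
        rw [Nat.cast_sub ht1t2]
      rw [he]
      push_cast [hMzero]
      ring
    · rw [hlab3]
      have he : ((M - (t2 + 1) : ℕ) : ZMod (κ (p + 2))) =
          ((M : ℕ) : ZMod (κ (p + 2))) - ((t2 + 1 : ℕ) : ZMod (κ (p + 2))) := by
        rw [Nat.cast_sub (by omega)]
      rw [he]
      push_cast
      ring
end

section
/- If D is a digraph that either has exactly one vertex or in which every vertex has at least one out-neighbor, then the sequence of m-step competition graphs {C(D^m)}_{m≥1} converges. -/
open Digraph' in
lemma hasWalk_succ' {V : Type*} (D : Digraph' V) {m : ℕ} {u z z' : V}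
    (h : D.HasWalk m u z) (h' : D.Adj z z') : D.HasWalk (m + 1) u z' := by
  obtain ⟨f, hf0, hfm, hf⟩ := h
  refine ⟨fun t => if t = m + 1 then z' else f t, by simp [hf0], by simp, ?_⟩
  intro t ht
  rcases Nat.lt_or_ge t m with h1 | h1
  · simp only [if_neg (by omega : t ≠ m + 1), if_neg (by omega : t + 1 ≠ m + 1)]
    exact hf t h1
  · have htm : t = m := by omega
    simp only [if_neg (by omega : t ≠ m + 1), if_pos (by omega : t + 1 = m + 1)]
    rw [htm, hfm]
    exact h'

open Digraph' in
/-- if `D` has exactly one vertex or every vertex of `D` has an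
out-neighbor, then `{C(D^m)}_{m≥1}` converges. -/
theorem stmt12 {V : Type*} [Fintype V] (D : Digraph' V)
    (h : (∃ v : V, ∀ w : V, w = v) ∨ ∀ v : V, ∃ w : V, D.Adj v w) :
    D.CompConverges := by
  rcases h with ⟨v, hv⟩ | h
  · refine ⟨1, le_refl 1, fun m _ => ?_⟩
    ext a b
    constructor <;> rintro ⟨hne, _⟩ <;> exact absurd ((hv a).trans (hv b).symm) hne
  · have mono : Monotone D.compGraph := by
      apply monotone_nat_of_le_succ
      intro m a b hab
      obtain ⟨hne, z, h1, h2⟩ := hab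
      obtain ⟨z', hz'⟩ := h z
      exact ⟨hne, z', hasWalk_succ' D h1 hz', hasWalk_succ' D h2 hz'⟩
    have fin : Finite (SimpleGraph V) :=
      Finite.of_injective (fun G => G.Adj) fun G H hGH => SimpleGraph.ext hGH
    obtain ⟨G, hGmem, hmax⟩ := Set.Finite.exists_maximalFor id _
      (Set.range D.compGraph).toFinite ⟨_, Set.mem_range_self 0⟩
    obtain ⟨N, hGN⟩ := hGmem
    refine ⟨max N 1, le_max_right _ _, fun m hm => ?_⟩
    have h1 : G = D.compGraph (max N 1) :=
      le_antisymm (hGN ▸ mono (le_max_left N 1))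
        (hmax ⟨max N 1, rfl⟩ (hGN ▸ mono (le_max_left N 1)))
    have h2 : G = D.compGraph m :=
      le_antisymm (hGN ▸ mono (le_trans (le_max_left N 1) hm))
        (hmax ⟨m, rfl⟩ (hGN ▸ mono (le_trans (le_max_left N 1) hm)))
    rw [← h1, ← h2]
end
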